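/- Let $\lambda > 0$, $L > 0$, $\hat\theta, \theta > 0$ with $\hat\theta < \theta$, $\eta > 0$, $\tau \in (0,1)$ satisfying $\theta \tau^2 - (2\theta + \frac{\eta L}{2})\tau + \theta - \hat\theta = 0$. Let $x, y \in \HH$, $w \in \HH$ with $\frac{\lambda L}{2}\|\lambda w + y - x\| \le \hat\theta$ and $\lambda \|y - x\| < \eta$. Set $\lambda' = \lambda/(1-\tau)$. Then $\frac{\lambda' L}{2}\|\lambda' w + y - x\| \le \theta$. -/

import Mathlib

theorem stmt_9 {H : Type*} [NormedAddCommGroup H] [InnerProductSpace ℝ H]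
    (lam L θh θ η τ : ℝ) (hlam : 0 < lam) (hL : 0 < L)
    (hθh : 0 < θh) (hθ : θh < θ) (hη : 0 < η)
    (hτ0 : 0 < τ) (hτ1 : τ < 1)
    (hroot : θ * τ^2 - (2*θ + η*L/2) * τ + (θ - θh) = 0)
    (x y w : H) (h : lam * L / 2 * ‖lam • w + y - x‖ ≤ θh)
    (hsmall : lam * ‖y - x‖ < η)
    (lam' : ℝ) (hlam' : lam' = lam / (1 - τ)) :
    lam' * L / 2 * ‖lam' • w + y - x‖ ≤ θ := by
  have hτ1' : (0:ℝ) < 1 - τ := by linarith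
  have hne : (1 - τ) ≠ 0 := ne_of_gt hτ1'
  have key : lam' • w + y - x
      = (1/(1-τ)) • (lam • w + y - x) - (τ/(1-τ)) • (y - x) := by
    rw [hlam']
    match_scalars <;> field_simp <;> ring
  have hnorm : ‖lam' • w + y - x‖
      ≤ (1/(1-τ)) * ‖lam • w + y - x‖ + (τ/(1-τ)) * ‖y - x‖ := by
    rw [key]
    calc _ ≤ ‖(1/(1-τ)) • (lam • w + y - x)‖ + ‖(τ/(1-τ)) • (y - x)‖ :=
          norm_sub_le _ _
      _ = (1/(1-τ)) * ‖lam • w + y - x‖ + (τ/(1-τ)) * ‖y - x‖ := by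
          rw [norm_smul, norm_smul, Real.norm_eq_abs, Real.norm_eq_abs,
            abs_of_pos (by positivity), abs_of_pos (by positivity)]
  have hnv : (0:ℝ) ≤ ‖lam • w + y - x‖ := norm_nonneg _
  have hnu : (0:ℝ) ≤ ‖y - x‖ := norm_nonneg _
  have hlam'pos : 0 < lam' := by rw [hlam']; positivity
  have : lam' * L / 2 * ‖lam' • w + y - x‖
      ≤ lam' * L / 2 * ((1/(1-τ)) * ‖lam • w + y - x‖ + (τ/(1-τ)) * ‖y - x‖) := by
    apply mul_le_mul_of_nonneg_left hnorm (by positivity)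
  rw [hlam'] at this ⊢
  have expand : lam / (1 - τ) * L / 2 * ((1/(1-τ)) * ‖lam • w + y - x‖ + (τ/(1-τ)) * ‖y - x‖)
      = (1/(1-τ)^2) * (lam * L / 2 * ‖lam • w + y - x‖) + (τ/(1-τ)^2) * (L/2 * (lam * ‖y - x‖)) := by
    field_simp
  rw [expand] at this
  have h2 : (τ/(1-τ)^2) * (L/2 * (lam * ‖y - x‖)) ≤ (τ/(1-τ)^2) * (L/2 * η) := by
    apply mul_le_mul_of_nonneg_left _ (by positivity)
    exact mul_le_mul_of_nonneg_left hsmall.le (by positivity)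
  have h1 : (1/(1-τ)^2) * (lam * L / 2 * ‖lam • w + y - x‖) ≤ (1/(1-τ)^2) * θh :=
    mul_le_mul_of_nonneg_left h (by positivity)
  have hfin : (1/(1-τ)^2) * θh + (τ/(1-τ)^2) * (L/2 * η) = θ := by
    have hsq : (0:ℝ) < (1-τ)^2 := by positivity
    field_simp
    nlinarith [hroot]
  linarith
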